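/- arXiv:2105.08720 — 3 statements merged into one kernel-verified Lean document; each statement's English description precedes it below -/
import Mathlib

section
/- Let n, m ≥ 1, let D ⊆ ℂⁿ and D' ⊆ ℂᵐ be open sets, let G be a complex Finsler metric on D and H a complex Finsler metric on D', and let f : D → D' be holomorphic. Define ũ : D → ℝ by ũ(z) = sup { H(f(z), f'(z)·v) : v ∈ ℂⁿ, G(z,v) = 1 }, where f'(z) : ℂⁿ → ℂᵐ is the complex derivative of f at z. Then ũ is continuous on D, and for every z ∈ D and every v ∈ ℂⁿ one has H(f(z), f'(z)·v) ≤ ũ(z) · G(z,v). -/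
section AuxPullbackFinsler
open Metric Set Complex MeasureTheory

private theorem fderiv_pair_contOn {n m : ℕ}
    (D : Set (EuclideanSpace ℂ (Fin n))) (hD : IsOpen D)
    (f : EuclideanSpace ℂ (Fin n) → EuclideanSpace ℂ (Fin m))
    (hf : DifferentiableOn ℂ f D) :
    ContinuousOn (fun p : EuclideanSpace ℂ (Fin n) × EuclideanSpace ℂ (Fin n) =>
      fderiv ℂ f p.1 p.2) (D ×ˢ (Set.univ : Set (EuclideanSpace ℂ (Fin n)))) := by
  refine continuousOn_of_forall_continuousAt ?_
  rintro ⟨z₀, v₀⟩ hp₀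
  have hz₀ : z₀ ∈ D := hp₀.1
  obtain ⟨r, hr, hrD⟩ : ∃ r > 0, closedBall z₀ r ⊆ D := by
    obtain ⟨r, hr, h⟩ := Metric.isOpen_iff.mp hD z₀ hz₀
    exact ⟨r / 2, by linarith, (Metric.closedBall_subset_ball (by linarith)).trans h⟩
  obtain ⟨ρ, hρ, hρM⟩ : ∃ ρ : ℝ, 0 < ρ ∧ ρ * (‖v₀‖ + 1) = r / 2 := by
    refine ⟨r / (2 * (‖v₀‖ + 1)), by positivity, ?_⟩
    field_simp
  set U : Set (EuclideanSpace ℂ (Fin n) × EuclideanSpace ℂ (Fin n)) :=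
    ball z₀ (r / 2) ×ˢ ball v₀ 1 with hU
  have hUopen : IsOpen U := (isOpen_ball).prod isOpen_ball
  have hp₀U : (z₀, v₀) ∈ U := ⟨mem_ball_self (by linarith), mem_ball_self one_pos⟩
  -- membership lemma
  have hmemD : ∀ p ∈ U, ∀ t : ℂ, ‖t‖ ≤ ρ → p.1 + t • p.2 ∈ D := by
    rintro ⟨z, v⟩ ⟨hz, hv⟩ t ht
    apply hrD
    have hvn : ‖v‖ ≤ ‖v₀‖ + 1 := by
      have := norm_sub_norm_le v v₀
      have h2 : ‖v - v₀‖ < 1 := mem_ball_iff_norm.mp hv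
      linarith
    have h1 : ‖t • v‖ ≤ r / 2 := by
      rw [norm_smul, ← hρM]
      exact mul_le_mul ht hvn (norm_nonneg _) hρ.le
    rw [Metric.mem_closedBall, dist_eq_norm]
    have hzn : ‖z - z₀‖ < r / 2 := mem_ball_iff_norm.mp hz
    calc ‖z + t • v - z₀‖ = ‖(z - z₀) + t • v‖ := by rw [add_sub_right_comm]
      _ ≤ ‖z - z₀‖ + ‖t • v‖ := norm_add_le _ _
      _ ≤ r := by linarith
  -- the Cauchy integral representation
  set Iformula : EuclideanSpace ℂ (Fin n) × EuclideanSpace ℂ (Fin n) →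
      EuclideanSpace ℂ (Fin m) :=
    fun p => (2 * Real.pi * Complex.I : ℂ)⁻¹ •
      ∮ t in C(0, ρ), (t - 0) ^ (-2 : ℤ) • f (p.1 + t • p.2) with hIf
  have hEq : ∀ p ∈ U, fderiv ℂ f p.1 p.2 = Iformula p := by
    rintro ⟨z, v⟩ hpU
    have hzD : z ∈ D := by
      have := hmemD _ hpU 0 (by simp [hρ.le])
      simpa using this
    have hdf : DifferentiableAt ℂ f z := hf.differentiableAt (hD.mem_nhds hzD)
    have hg : HasDerivAt (fun t : ℂ => f (z + t • v)) (fderiv ℂ f z v) 0 := by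
      have hlin : HasDerivAt (fun t : ℂ => z + t • v) v 0 := by
        have := (hasDerivAt_id (0 : ℂ)).smul_const v
        simpa using this.const_add z
      have hF : HasFDerivAt f (fderiv ℂ f z) ((fun t : ℂ => z + t • v) 0) := by
        simpa using hdf.hasFDerivAt
      exact hF.comp_hasDerivAt 0 hlin
    have hdc : DiffContOnCl ℂ (fun t : ℂ => f (z + t • v)) (ball 0 ρ) := by
      apply DifferentiableOn.diffContOnCl
      rw [closure_ball (0 : ℂ) hρ.ne']
      intro t ht
      have htρ : ‖t‖ ≤ ρ := by simpa [dist_eq_norm] using ht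
      have hdin : DifferentiableAt ℂ (fun t : ℂ => z + t • v) t :=
        ((differentiableAt_id.smul_const v).const_add z)
      exact ((hf.differentiableAt (hD.mem_nhds (hmemD _ hpU t htρ))).comp t
        hdin).differentiableWithinAt
    have := hdc.deriv_eq_smul_circleIntegral hρ
    rw [hg.deriv] at this
    have hI2 : (∮ t in C(0, ρ), (t - 0) ^ (-2 : ℤ) • f (z + t • v))
        = ∮ t in C(0, ρ), (1 / (t - 0) ^ 2) • f (z + t • v) :=
      congrArg (fun g => circleIntegral g 0 ρ) (funext fun t => by simp [zpow_neg, one_div])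
    show fderiv ℂ f z v = (2 * Real.pi * Complex.I : ℂ)⁻¹ •
      ∮ t in C(0, ρ), (t - 0) ^ (-2 : ℤ) • f (z + t • v)
    rw [hI2, this, smul_smul, inv_mul_cancel₀ two_pi_I_ne_zero, one_smul]
  -- continuity of the formula on U
  have hIcont : ContinuousOn Iformula U := by
    rw [continuousOn_iff_continuous_restrict]
    have key : Continuous fun x : U => (2 * Real.pi * Complex.I : ℂ)⁻¹ •
        ∫ θ in (0:ℝ)..(2 * Real.pi), deriv (circleMap 0 ρ) θ •
          ((circleMap 0 ρ θ - 0) ^ (-2 : ℤ) •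
            f ((x : EuclideanSpace ℂ (Fin n) × EuclideanSpace ℂ (Fin n)).1
              + circleMap 0 ρ θ •
                (x : EuclideanSpace ℂ (Fin n) × EuclideanSpace ℂ (Fin n)).2)) := by
      apply Continuous.fun_const_smul
      apply intervalIntegral.continuous_parametric_intervalIntegral_of_continuous' (μ := volume)
      have hc1 : Continuous fun q : U × ℝ => deriv (circleMap 0 ρ) q.2 := by
        simp only [deriv_circleMap]
        exact ((continuous_circleMap 0 ρ).comp continuous_snd).mul continuous_const
      have hc2 : Continuous fun q : U × ℝ => (circleMap 0 ρ q.2 - 0) ^ (-2 : ℤ) := by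
        refine Continuous.zpow₀ (((continuous_circleMap 0 ρ).comp continuous_snd).sub
          continuous_const) _ fun q => Or.inl ?_
        simpa using circleMap_ne_center (c := (0:ℂ)) hρ.ne' (θ := q.2)
      have hinner : Continuous fun q : U × ℝ =>
          (q.1 : EuclideanSpace ℂ (Fin n) × EuclideanSpace ℂ (Fin n)).1
            + circleMap 0 ρ q.2 •
              (q.1 : EuclideanSpace ℂ (Fin n) × EuclideanSpace ℂ (Fin n)).2 :=
        (continuous_fst.subtype_val.fst).add
          (((continuous_circleMap 0 ρ).comp continuous_snd).smul
            continuous_fst.subtype_val.snd)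
      have hc3 : Continuous fun q : U × ℝ =>
          f ((q.1 : EuclideanSpace ℂ (Fin n) × EuclideanSpace ℂ (Fin n)).1
            + circleMap 0 ρ q.2 •
              (q.1 : EuclideanSpace ℂ (Fin n) × EuclideanSpace ℂ (Fin n)).2) := by
        refine hf.continuousOn.comp_continuous hinner fun q => ?_
        exact hmemD _ q.1.2 _ (by simp [norm_circleMap_zero, abs_of_pos hρ])
      exact hc1.smul (hc2.smul hc3)
    exact key
  -- conclude
  have hIca : ContinuousAt Iformula (z₀, v₀) :=
    hIcont.continuousAt (hUopen.mem_nhds hp₀U)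
  refine hIca.congr ?_
  filter_upwards [hUopen.mem_nhds hp₀U] with p hp
  exact (hEq p hp).symm

end AuxPullbackFinsler

open Metric Set



/-- The local (coordinate-chart) form of Theorem 1.3 / Theorem 4.1 of the
paper, with the explicit optimal factor: if `G`, `H` are complex Finsler
metrics on open sets `D ⊆ ℂⁿ`, `D' ⊆ ℂᵐ` and `f : D → D'` is holomorphic, then
`ũ(z) = sup {H(f(z), f'(z)v) : G(z,v) = 1}` is continuous on `D` and
`H(f(z), f'(z)v) ≤ ũ(z) G(z,v)` for all `z ∈ D`, `v ∈ ℂⁿ`. -/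
theorem pullback_finsler_le {n m : ℕ} (hn : 1 ≤ n) (hm : 1 ≤ m)
    (D : Set (EuclideanSpace ℂ (Fin n))) (D' : Set (EuclideanSpace ℂ (Fin m)))
    (hD : IsOpen D) (hD' : IsOpen D')
    (G : EuclideanSpace ℂ (Fin n) → EuclideanSpace ℂ (Fin n) → ℝ)
    (H : EuclideanSpace ℂ (Fin m) → EuclideanSpace ℂ (Fin m) → ℝ)
    -- G is a complex Finsler metric on D
    (hGcont : ContinuousOn (fun p => G p.1 p.2) (D ×ˢ (Set.univ : Set (EuclideanSpace ℂ (Fin n)))))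
    (hGnonneg : ∀ z ∈ D, ∀ v, 0 ≤ G z v)
    (hGzero : ∀ z ∈ D, ∀ v, G z v = 0 ↔ v = 0)
    (hGhom : ∀ z ∈ D, ∀ (v) (ζ : ℂ), G z (ζ • v) = ‖ζ‖ ^ 2 * G z v)
    -- H is a complex Finsler metric on D'
    (hHcont : ContinuousOn (fun p => H p.1 p.2) (D' ×ˢ (Set.univ : Set (EuclideanSpace ℂ (Fin m)))))
    (hHnonneg : ∀ w ∈ D', ∀ ξ, 0 ≤ H w ξ)
    (hHzero : ∀ w ∈ D', ∀ ξ, H w ξ = 0 ↔ ξ = 0)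
    (hHhom : ∀ w ∈ D', ∀ (ξ) (ζ : ℂ), H w (ζ • ξ) = ‖ζ‖ ^ 2 * H w ξ)
    -- f : D → D' is holomorphic
    (f : EuclideanSpace ℂ (Fin n) → EuclideanSpace ℂ (Fin m))
    (hf : DifferentiableOn ℂ f D) (hfD : Set.MapsTo f D D')
    -- the fiberwise supremum
    (ut : EuclideanSpace ℂ (Fin n) → ℝ)
    (hut : ∀ z ∈ D, ut z =
      sSup ((fun v => H (f z) (fderiv ℂ f z v)) '' {v : EuclideanSpace ℂ (Fin n) | G z v = 1})) :
    ContinuousOn ut D ∧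
    ∀ z ∈ D, ∀ v : EuclideanSpace ℂ (Fin n),
      H (f z) (fderiv ℂ f z v) ≤ ut z * G z v := by
  set S : Set (EuclideanSpace ℂ (Fin n)) := Metric.sphere 0 1 with hS
  have hScpt : IsCompact S := isCompact_sphere 0 1
  have hSne : S.Nonempty := by
    refine ⟨EuclideanSpace.single (⟨0, hn⟩ : Fin n) (1 : ℂ), ?_⟩
    simp [hS, mem_sphere_iff_norm, EuclideanSpace.norm_single]
  have hSmem : ∀ w ∈ S, ‖w‖ = 1 := fun w hw => by
    simpa [hS, mem_sphere_iff_norm] using hw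
  have hSne0 : ∀ w ∈ S, w ≠ 0 := by
    intro w hw h
    have := hSmem w hw
    rw [h] at this
    simp at this
  have hGpos : ∀ z ∈ D, ∀ v, v ≠ 0 → 0 < G z v := fun z hz v hv =>
    lt_of_le_of_ne (hGnonneg z hz v) fun h => hv ((hGzero z hz v).mp h.symm)
  set Φ : EuclideanSpace ℂ (Fin n) × EuclideanSpace ℂ (Fin n) → ℝ :=
    fun p => H (f p.1) (fderiv ℂ f p.1 p.2) / G p.1 p.2 with hΦ
  -- continuity of Φ on D ×ˢ S
  have hfdpair := fderiv_pair_contOn D hD f hf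
  have hnum : ContinuousOn (fun p : EuclideanSpace ℂ (Fin n) × EuclideanSpace ℂ (Fin n) =>
      H (f p.1) (fderiv ℂ f p.1 p.2)) (D ×ˢ (univ : Set (EuclideanSpace ℂ (Fin n)))) := by
    refine hHcont.comp (ContinuousOn.prodMk ?_ hfdpair) fun p hp => ⟨hfD hp.1, trivial⟩
    exact hf.continuousOn.comp continuousOn_fst fun p hp => hp.1
  have hΦcont : ContinuousOn Φ (D ×ˢ S) := by
    refine ContinuousOn.div (hnum.mono (prod_mono_right (subset_univ _)))
      (hGcont.mono (prod_mono_right (subset_univ _))) fun p hp => ?_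
    exact (hGpos p.1 hp.1 p.2 (hSne0 p.2 hp.2)).ne'
  -- scaling computation
  have key : ∀ z ∈ D, ∀ v : EuclideanSpace ℂ (Fin n), v ≠ 0 →
      Φ (z, ((‖v‖ : ℂ))⁻¹ • v) = H (f z) (fderiv ℂ f z v) / G z v := by
    intro z hz v hv
    have hvn : (0:ℝ) < ‖v‖ := norm_pos_iff.mpr hv
    have hns : ‖((‖v‖ : ℂ))⁻¹‖ ^ 2 = (‖v‖⁻¹) ^ 2 := by
      rw [norm_inv, Complex.norm_real, Real.norm_of_nonneg (norm_nonneg v)]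
    have h1 : fderiv ℂ f z (((‖v‖ : ℂ))⁻¹ • v) = ((‖v‖ : ℂ))⁻¹ • fderiv ℂ f z v :=
      (fderiv ℂ f z).map_smul _ _
    have h2 : H (f z) (fderiv ℂ f z (((‖v‖ : ℂ))⁻¹ • v))
        = (‖v‖⁻¹) ^ 2 * H (f z) (fderiv ℂ f z v) := by
      rw [h1, hHhom (f z) (hfD hz) _ _, hns]
    have h3 : G z (((‖v‖ : ℂ))⁻¹ • v) = (‖v‖⁻¹) ^ 2 * G z v := by
      rw [hGhom z hz v _, hns]
    simp only [hΦ]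
    rw [h2, h3, mul_div_mul_left]
    positivity
  have hsphere : ∀ v : EuclideanSpace ℂ (Fin n), v ≠ 0 → ((‖v‖ : ℂ))⁻¹ • v ∈ S := by
    intro v hv
    have hvn : (0:ℝ) < ‖v‖ := norm_pos_iff.mpr hv
    rw [hS, mem_sphere_iff_norm, sub_zero, norm_smul, norm_inv, Complex.norm_real,
      Real.norm_of_nonneg (norm_nonneg v), inv_mul_cancel₀ hvn.ne']
  -- the two descriptions of the sup-set agree
  have hAB : ∀ z ∈ D, (fun v => H (f z) (fderiv ℂ f z v)) ''
      {v : EuclideanSpace ℂ (Fin n) | G z v = 1} = (fun w => Φ (z, w)) '' S := by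
    intro z hz
    apply Set.Subset.antisymm
    · rintro x ⟨v, hv1, rfl⟩
      have hv1 : G z v = 1 := hv1
      have hv0 : v ≠ 0 := by
        intro h
        rw [h, (hGzero z hz 0).mpr rfl] at hv1
        norm_num at hv1
      refine ⟨_, hsphere v hv0, ?_⟩
      show Φ (z, ((‖v‖ : ℂ))⁻¹ • v) = H (f z) (fderiv ℂ f z v)
      rw [key z hz v hv0, hv1, div_one]
    · rintro x ⟨w, hwS, rfl⟩
      have hw0 : w ≠ 0 := hSne0 w hwS
      have hGw : 0 < G z w := hGpos z hz w hw0
      set c : ℝ := Real.sqrt (G z w) with hc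
      have hcpos : 0 < c := Real.sqrt_pos.mpr hGw
      have hc2 : c ^ 2 = G z w := Real.sq_sqrt hGw.le
      refine ⟨((c : ℂ))⁻¹ • w, ?_, ?_⟩
      · show G z (((c : ℂ))⁻¹ • w) = 1
        rw [hGhom z hz w _, norm_inv, Complex.norm_real, Real.norm_of_nonneg hcpos.le,
          inv_pow, hc2, inv_mul_cancel₀ hGw.ne']
      · show H (f z) (fderiv ℂ f z (((c : ℂ))⁻¹ • w)) = Φ (z, w)
        rw [(fderiv ℂ f z).map_smul, hHhom (f z) (hfD hz) _ _, norm_inv, Complex.norm_real,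
          Real.norm_of_nonneg hcpos.le, inv_pow, hc2]
        simp only [hΦ]
        rw [inv_mul_eq_div]
  -- boundedness of the sup-set
  have hbdd : ∀ z ∈ D, BddAbove ((fun w => Φ (z, w)) '' S) := by
    intro z hz
    refine (hScpt.image_of_continuousOn ?_).bddAbove
    exact hΦcont.comp (Continuous.continuousOn (by continuity)) fun w hw => ⟨hz, hw⟩
  -- the inequality
  have hineq : ∀ z ∈ D, ∀ v : EuclideanSpace ℂ (Fin n),
      H (f z) (fderiv ℂ f z v) ≤ ut z * G z v := by
    intro z hz v
    by_cases hv : v = 0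
    · subst hv
      rw [(hGzero z hz 0).mpr rfl, map_zero, (hHzero (f z) (hfD hz) 0).mpr rfl, mul_zero]
    · have hGv : 0 < G z v := hGpos z hz v hv
      have hmem : H (f z) (fderiv ℂ f z v) / G z v ∈ (fun w => Φ (z, w)) '' S :=
        ⟨_, hsphere v hv, key z hz v hv⟩
      have hle : H (f z) (fderiv ℂ f z v) / G z v ≤ ut z := by
        rw [hut z hz, hAB z hz]
        exact le_csSup (hbdd z hz) hmem
      calc H (f z) (fderiv ℂ f z v) = (H (f z) (fderiv ℂ f z v) / G z v) * G z v := by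
            field_simp
        _ ≤ ut z * G z v := by
            exact mul_le_mul_of_nonneg_right hle hGv.le
  refine ⟨?_, hineq⟩
  -- continuity of ut
  refine continuousOn_of_forall_continuousAt fun z₀ hz₀ => ?_
  obtain ⟨r, hr, hrD⟩ : ∃ r > 0, closedBall z₀ r ⊆ D := by
    obtain ⟨r, hr', h⟩ := Metric.isOpen_iff.mp hD z₀ hz₀
    exact ⟨r / 2, by linarith, (Metric.closedBall_subset_ball (by linarith)).trans h⟩
  have hKcpt : IsCompact ((closedBall z₀ r) ×ˢ S) := (isCompact_closedBall _ _).prod hScpt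
  have hUC : UniformContinuousOn Φ ((closedBall z₀ r) ×ˢ S) :=
    hKcpt.uniformContinuousOn_of_continuous
      (hΦcont.mono (prod_mono_left hrD))
  rw [Metric.continuousAt_iff]
  intro ε hε
  obtain ⟨δ, hδ, hδ'⟩ := Metric.uniformContinuousOn_iff.mp hUC (ε / 2) (by linarith)
  refine ⟨min δ r, lt_min hδ hr, fun z hz => ?_⟩
  have hzd : dist z z₀ < δ := lt_of_lt_of_le hz (min_le_left _ _)
  have hzK : z ∈ closedBall z₀ r :=
    mem_closedBall.mpr (le_of_lt (lt_of_lt_of_le hz (min_le_right _ _)))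
  have hzD : z ∈ D := hrD hzK
  have hz₀K : z₀ ∈ closedBall z₀ r := mem_closedBall_self hr.le
  have hpt : ∀ w ∈ S, |Φ (z, w) - Φ (z₀, w)| < ε / 2 := by
    intro w hw
    have hd : dist ((z, w) : _ × _) (z₀, w) < δ := by
      rw [Prod.dist_eq, dist_self]
      simpa [max_eq_left dist_nonneg] using hzd
    have := hδ' (z, w) ⟨hzK, hw⟩ (z₀, w) ⟨hz₀K, hw⟩ hd
    simpa [Real.dist_eq] using this
  have hup : ∀ z₁, z₁ ∈ D → ∀ z₂, z₂ ∈ D →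
      (∀ w ∈ S, Φ (z₁, w) ≤ Φ (z₂, w) + ε / 2) → ut z₁ ≤ ut z₂ + ε / 2 := by
    intro z₁ hz₁ z₂ hz₂ hptle
    rw [hut z₁ hz₁, hAB z₁ hz₁]
    refine csSup_le (hSne.image _) ?_
    rintro x ⟨w, hw, rfl⟩
    have h2 : Φ (z₂, w) ≤ ut z₂ := by
      rw [hut z₂ hz₂, hAB z₂ hz₂]
      exact le_csSup (hbdd z₂ hz₂) ⟨w, hw, rfl⟩
    calc Φ (z₁, w) ≤ Φ (z₂, w) + ε / 2 := hptle w hw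
      _ ≤ ut z₂ + ε / 2 := by linarith
  have h1 : ut z ≤ ut z₀ + ε / 2 :=
    hup z hzD z₀ hz₀ fun w hw => by
      have := abs_lt.mp (hpt w hw); linarith [this.2]
  have h2 : ut z₀ ≤ ut z + ε / 2 :=
    hup z₀ hz₀ z hzD fun w hw => by
      have := abs_lt.mp (hpt w hw); linarith [this.1]
  rw [Real.dist_eq, abs_lt]
  constructor <;> linarith
end

section
/- For every real r > 0 and every real K > 0 there exists a real number α > 1 such that (α−1)²/((2α−1)·r) = K²·r/(2α+1), and for this α one has α²/((2α−1)·r) + K²·r/(2α+1) ≤ 1/r + K. -/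
/-- The analytic optimization at the heart of the Hessian comparison
`H(ρ)(u,u) ≤ 1/ρ + K` (Theorem 3.2 of the paper): for all `r > 0` and `K > 0`
there exists `α > 1` balancing the two error terms, for which the index-form
upper bound `α²/((2α−1)r) + K²r/(2α+1)` is at most `1/r + K`. -/
theorem exists_alpha_index_form_bound (r K : ℝ) (hr : 0 < r) (hK : 0 < K) :
    ∃ α : ℝ, 1 < α ∧
      (α - 1) ^ 2 / ((2 * α - 1) * r) = K ^ 2 * r / (2 * α + 1) ∧
      α ^ 2 / ((2 * α - 1) * r) + K ^ 2 * r / (2 * α + 1) ≤ 1 / r + K := by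
  set β : ℝ := K * r with hβdef
  have hβ0 : 0 < β := mul_pos hK hr
  set f : ℝ → ℝ := fun x => (x - 1) ^ 2 * (2 * x + 1) - β ^ 2 * (2 * x - 1) with hf
  set a : ℝ := max 1 (β - 1 / 2) with ha
  have ha1 : 1 ≤ a := le_max_left _ _
  have haβ : β - 1 / 2 ≤ a := le_max_right _ _
  set b : ℝ := a + β + 2 with hb
  have hab : a ≤ b := by nlinarith
  have hfa : f a < 0 := by
    rcases max_cases 1 (β - 1 / 2) with ⟨h1, h2⟩ | ⟨h1, h2⟩
    · rw [ha, h1]; simp only [hf]; nlinarith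
    · rw [ha, h1]; simp only [hf]; nlinarith
  have hfb : 0 < f b := by
    have hb1 : β + 2 ≤ b - 1 := by simp only [hb]; linarith
    have hsq : β ^ 2 + 4 ≤ (b - 1) ^ 2 := by nlinarith
    simp only [hf]
    nlinarith [hβ0, ha1, mul_pos hβ0 hβ0]
  have hcont : ContinuousOn f (Set.Icc a b) :=
    (by fun_prop : Continuous f).continuousOn
  obtain ⟨α, hαmem, hfα⟩ :=
    intermediate_value_Icc hab hcont ⟨hfa.le, hfb.le⟩
  have hαa : a < α := lt_of_le_of_ne hαmem.1 (by rintro rfl; exact hfa.ne hfα)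
  have hα1 : 1 < α := lt_of_le_of_lt ha1 hαa
  have h1 : 0 < 2 * α - 1 := by linarith
  have h2 : 0 < 2 * α + 1 := by linarith
  have heq : (α - 1) ^ 2 * (2 * α + 1) = β ^ 2 * (2 * α - 1) := by
    simp only [hf] at hfα; linarith
  have hden : (2 * α - 1) * r > 0 := mul_pos h1 hr
  have eqdiv : (α - 1) ^ 2 / ((2 * α - 1) * r) = K ^ 2 * r / (2 * α + 1) := by
    rw [div_eq_div_iff hden.ne' h2.ne']
    simp only [hβdef] at heq
    linear_combination heq
  refine ⟨α, hα1, eqdiv, ?_⟩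
  have hKr : 2 * β ≤ 2 * α + 1 := by linarith
  have hterm : K ^ 2 * r / (2 * α + 1) ≤ K / 2 := by
    rw [div_le_iff₀ h2]
    nlinarith
  have hterm1 : (α - 1) ^ 2 / ((2 * α - 1) * r) ≤ K / 2 := by
    rw [eqdiv]; exact hterm
  have key : α ^ 2 / ((2 * α - 1) * r) =
      1 / r + (α - 1) ^ 2 / ((2 * α - 1) * r) := by
    field_simp [show α * 2 - 1 ≠ 0 by linarith]
    ring
  rw [key]
  linarith
end

section
/- Let f : ℝ → ℝ be given by f(x) = (arctanh x)². Then for every r ∈ (0,1), ((1−r²)²/4) · ( f''(r) + f'(r)/r ) ≤ 2·(1 + 2·arctanh r), where f' and f'' denote the first and second derivatives of f. -/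
/-- The inverse hyperbolic tangent, `arctanh x = (1/2) log((1+x)/(1−x))`.
On the unit disc with the Poincaré metric of Gaussian curvature `−4`, the
distance from `0` to `ζ` is `arctanh |ζ|`. -/
noncomputable def arctanh (x : ℝ) : ℝ := (1 / 2) * Real.log ((1 + x) / (1 - x))

lemma hasDerivAt_arctanh {x : ℝ} (h1 : -1 < x) (h2 : x < 1) :
    HasDerivAt arctanh (1 / (1 - x ^ 2)) x := by
  have hp : (0:ℝ) < 1 + x := by linarith
  have hm : (0:ℝ) < 1 - x := by linarith
  have h : HasDerivAt (fun x : ℝ => (1/2) * (Real.log (1 + x) - Real.log (1 - x)))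
      ((1/2) * (1/(1+x) - (-1)/(1-x))) x := by
    have ha : HasDerivAt (fun x : ℝ => Real.log (1 + x)) (1/(1+x)) x := by
      have : HasDerivAt (fun x : ℝ => 1 + x) 1 x := by
        simpa using (hasDerivAt_id x).const_add 1
      simpa [Function.comp_def] using (Real.hasDerivAt_log hp.ne').comp x this
    have hb : HasDerivAt (fun x : ℝ => Real.log (1 - x)) ((-1)/(1-x)) x := by
      have : HasDerivAt (fun x : ℝ => 1 - x) (-1) x := by
        exact (hasDerivAt_id' x).const_sub 1
      have := (Real.hasDerivAt_log hm.ne').comp x this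
      simpa [div_eq_mul_inv, mul_comm, Function.comp_def] using this
    exact (ha.sub hb).const_mul _
  have heq : arctanh =ᶠ[nhds x] fun x : ℝ => (1/2) * (Real.log (1 + x) - Real.log (1 - x)) := by
    have : Set.Ioo (-1:ℝ) 1 ∈ nhds x := Ioo_mem_nhds h1 h2
    filter_upwards [this] with y hy
    have hp : (0:ℝ) < 1 + y := by linarith [hy.1]
    have hm : (0:ℝ) < 1 - y := by linarith [hy.2]
    simp [arctanh, Real.log_div hp.ne' hm.ne']
  have := h.congr_of_eventuallyEq heq
  refine this.congr_deriv ?_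
  have : 1 - x ^ 2 = (1+x)*(1-x) := by ring
  rw [this]
  field_simp
  ring

lemma hasDerivAt_f {f : ℝ → ℝ} (hf : ∀ x, f x = (arctanh x) ^ 2)
    {x : ℝ} (h1 : -1 < x) (h2 : x < 1) :
    HasDerivAt f (2 * arctanh x / (1 - x ^ 2)) x := by
  have h := ((hasDerivAt_arctanh h1 h2).pow 2)
  have : f = fun x => arctanh x ^ 2 := funext hf
  rw [this]
  refine h.congr_deriv ?_
  field_simp
  norm_num

lemma deriv_f_eq {f : ℝ → ℝ} (hf : ∀ x, f x = (arctanh x) ^ 2)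
    {x : ℝ} (h1 : -1 < x) (h2 : x < 1) :
    deriv f x = 2 * arctanh x / (1 - x ^ 2) :=
  (hasDerivAt_f hf h1 h2).deriv

lemma deriv2_f_eq {f : ℝ → ℝ} (hf : ∀ x, f x = (arctanh x) ^ 2)
    {x : ℝ} (h1 : -1 < x) (h2 : x < 1) :
    deriv (deriv f) x = (2 + 4 * x * arctanh x) / (1 - x ^ 2) ^ 2 := by
  have hne : (1 - x ^ 2) ≠ 0 := by nlinarith
  have heq : deriv f =ᶠ[nhds x] fun y => 2 * arctanh y / (1 - y ^ 2) := by
    filter_upwards [Ioo_mem_nhds h1 h2] with y hy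
    exact deriv_f_eq hf hy.1 hy.2
  rw [Filter.EventuallyEq.deriv_eq heq]
  have hg : HasDerivAt (fun y : ℝ => 2 * arctanh y / (1 - y ^ 2))
      ((2 * (1/(1-x^2)) * (1 - x^2) - 2 * arctanh x * (-(2*x))) / (1 - x^2)^2) x := by
    have hnum : HasDerivAt (fun y : ℝ => 2 * arctanh y) (2 * (1/(1-x^2))) x :=
      (hasDerivAt_arctanh h1 h2).const_mul 2
    have hden : HasDerivAt (fun y : ℝ => 1 - y ^ 2) (-(2*x)) x := by
      have : HasDerivAt (fun y : ℝ => y ^ 2) (2*x) x := by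
        simpa using hasDerivAt_pow 2 x
      exact this.const_sub 1
    exact hnum.div hden hne
  rw [hg.deriv]
  field_simp
  ring

/-- The explicit form of Remark 5.1 of the paper (the disc instance of
Lemma 4.3): with `f(x) = (arctanh x)²`, so that `ϱ²(ζ) = f(|ζ|)` is the squared
Poincaré distance from the origin, for every `r ∈ (0,1)` the complex Hessian
`∂²ϱ²/∂ζ∂ζ̄ = (1/4)(f''(r) + f'(r)/r)` evaluated on a Poincaré-unit tangent
vector (of Euclidean length `1−r²`) is at most `2(1 + 2 arctanh r)`. -/
theorem poincare_sq_dist_hessian_bound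
    (f : ℝ → ℝ) (hf : ∀ x, f x = (arctanh x) ^ 2)
    (r : ℝ) (hr : r ∈ Set.Ioo (0 : ℝ) 1) :
    ((1 - r ^ 2) ^ 2 / 4) * (deriv (deriv f) r + deriv f r / r)
      ≤ 2 * (1 + 2 * arctanh r) := by
  obtain ⟨hr0, hr1⟩ := hr
  have h1 : (-1:ℝ) < r := by linarith
  have hne : (1 - r ^ 2) ≠ 0 := by nlinarith
  have hne2 : (1 - r ^ 2) > 0 := by nlinarith
  rw [deriv_f_eq hf h1 hr1, deriv2_f_eq hf h1 hr1]
  set a := arctanh r with ha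
  have ha0 : 0 ≤ a := by
    rw [ha, arctanh]
    have : (1:ℝ) ≤ (1 + r) / (1 - r) := by
      rw [le_div_iff₀ (by linarith)]; linarith
    have := Real.log_nonneg this
    linarith
  have hub : a ≤ r / (1 - r) := by
    rw [ha, arctanh]
    have hpos : (0:ℝ) < (1 + r) / (1 - r) := div_pos (by linarith) (by linarith)
    have := Real.log_le_sub_one_of_pos hpos
    have hnr : (1:ℝ) - r ≠ 0 := by linarith
    have h2 : (1 + r) / (1 - r) - 1 = 2 * (r / (1 - r)) := by
      field_simp
      ring
    rw [h2] at this
    linarith [this]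
  -- LHS simplifies to 1/2 + r*a + a*(1-r^2)/(2*r)
  have hLHS : ((1 - r ^ 2) ^ 2 / 4) * ((2 + 4 * r * a) / (1 - r ^ 2) ^ 2
      + 2 * a / (1 - r ^ 2) / r) = 1/2 + r*a + a*(1-r^2)/(2*r) := by
    field_simp
    ring
  rw [hLHS]
  have key : a * (1 - r) ≤ r := by
    have := mul_le_mul_of_nonneg_right hub (le_of_lt (by linarith : (0:ℝ) < 1 - r))
    rwa [div_mul_cancel₀] at this
    linarith
  have h3 : a*(1-r^2)/(2*r) ≤ 1 := by
    rw [div_le_one (by linarith)]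
    nlinarith
  nlinarith [mul_le_mul_of_nonneg_left hr1.le ha0]
end
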